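/- Let n ≥ m ≥ 2 and let μ be a probability measure on the edges of K_n maximizing β(μ; P_m) among all probability measures on edges of K_n. Then for every vertex x ∈ [n]: μ̄(x) · (m−1) · β(μ; P_m) = ∑_{P copy of P_m containing x} deg_P(x) · μ(P), where μ̄(x) = ∑_{y≠x} μ(x,y) and μ(P) = ∏_{e∈E(P)} μ(e). -/

import Mathlib

open Finset
open scoped Classical

/-- A (bounded, nonnegative) measure on the edges of the complete graph `K_n`,
given by a symmetric nonnegative weight function vanishing on the diagonal. -/
structure EdgeMeasure (n : ℕ) where
  w : Fin n → Fin n → ℝ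
  symm : ∀ i j, w i j = w j i
  diag : ∀ i, w i i = 0
  nonneg : ∀ i j, 0 ≤ w i j

/-- Total mass of an edge measure (each unordered edge counted once). -/
noncomputable def mass {n : ℕ} (μ : EdgeMeasure n) : ℝ :=
  (∑ i, ∑ j, μ.w i j) / 2

/-- Weighted degree `μ̄(v)` of a vertex. -/
noncomputable def mubar {n : ℕ} (μ : EdgeMeasure n) (v : Fin n) : ℝ :=
  ∑ u, μ.w v u

/-- The μ-weight of the path traced by a tuple of `m` vertices:
the product of the weights of its `m-1` consecutive edges. -/
noncomputable def pathWt {n m : ℕ} (μ : EdgeMeasure n) (x : Fin m → Fin n) : ℝ :=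
  ∏ i : Fin (m - 1),
    μ.w (x ⟨i.1, by have := i.2; omega⟩) (x ⟨i.1 + 1, by have := i.2; omega⟩)

/-- `β(μ; P_m)`: total μ-weight of the (unlabeled, non-induced) copies of the path
on `m` vertices in `K_n`; each unlabeled copy corresponds to exactly two injective
labeled tuples, whence the division by 2. -/
noncomputable def betaP {n : ℕ} (μ : EdgeMeasure n) (m : ℕ) : ℝ :=
  (∑ x ∈ univ.filter (fun x : Fin m → Fin n => Function.Injective x), pathWt μ x) / 2

/-- `β(P_m)`: the supremum of `β(μ; P_m)` over all `n` and all probability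
measures `μ` on the edges of `K_n`. -/
noncomputable def betaPathSup (m : ℕ) : ℝ :=
  sSup {r : ℝ | ∃ n : ℕ, ∃ μ : EdgeMeasure n, mass μ = 1 ∧ r = betaP μ m}

/-- `β*(μ; P_{(s,t)})` with the path of length `s` starting at vertex `vs` and the
path of length `t` starting at vertex `vt`: each copy of the disjoint union
`P_{s+1} ⊔ P_{t+1}` is recorded by a jointly injective pair of tuples. -/
noncomputable def betaStar {n : ℕ} (μ : EdgeMeasure n) (s t : ℕ) (vs vt : Fin n) : ℝ :=
  ∑ p ∈ univ.filter
      (fun p : (Fin (s + 1) → Fin n) × (Fin (t + 1) → Fin n) =>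
        Function.Injective (Sum.elim p.1 p.2) ∧ p.1 0 = vs ∧ p.2 0 = vt),
    pathWt μ p.1 * pathWt μ p.2

/-- `β*_{w,n}(P_{(s,t)})`: the supremum of `β*(μ; P_{(s,t)})` over all measures of
total mass `w` on the edges of `K_n`, the length-`s` path starting at vertex `n`
(index `n-1`) and the length-`t` path starting at vertex `1` (index `0`). -/
noncomputable def betaStarSupN (w : ℝ) (n s t : ℕ) : ℝ :=
  sSup {r : ℝ | ∃ μ : EdgeMeasure n, mass μ = w ∧
    ∃ h : 0 < n, r = betaStar μ s t ⟨n - 1, by omega⟩ ⟨0, h⟩}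

/-- `ρ(μ; m) = ∑_{x ∈ (n)_m} μ̄(x_1) (∏ μ(x_i,x_{i+1})) μ̄(x_m)`, the sum over
ordered tuples of `m` distinct vertices. -/
noncomputable def rho {n : ℕ} (μ : EdgeMeasure n) (m : ℕ) : ℝ :=
  if h : 0 < m then
    ∑ x ∈ univ.filter (fun x : Fin m → Fin n => Function.Injective x),
      mubar μ (x ⟨0, h⟩) * pathWt μ x * mubar μ (x ⟨m - 1, by omega⟩)
  else 0

/-- `ρ_n(m)`: supremum of `ρ(μ; m)` over probability measures on the edges of `K_n`. -/
noncomputable def rhoN (n m : ℕ) : ℝ :=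
  sSup {r : ℝ | ∃ μ : EdgeMeasure n, mass μ = 1 ∧ r = rho μ m}

/-- `ρ(m) = sup_n ρ_n(m)`. -/
noncomputable def rhoSup (m : ℕ) : ℝ :=
  sSup {r : ℝ | ∃ n : ℕ, r = rhoN n m}

/-- `μ` is the uniform probability measure on the edges of the cycle `C_m` on the
vertices `0, 1, …, m-1` of `K_n`: each cycle edge gets weight `1/m`. -/
def CycleUniform {n : ℕ} (μ : EdgeMeasure n) (m : ℕ) : Prop :=
  ∀ a b : Fin n, μ.w a b =
    (if a.1 < m ∧ b.1 < m ∧ b.1 = (a.1 + 1) % m then (1 : ℝ) / m else 0) +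
    (if a.1 < m ∧ b.1 < m ∧ a.1 = (b.1 + 1) % m then (1 : ℝ) / m else 0)

/-- `deg_P(v)`: the number of edges of the path traced by the tuple `p` that are
incident to the vertex `v`. -/
noncomputable def degTuple {n m : ℕ} (p : Fin m → Fin n) (v : Fin n) : ℕ :=
  ((univ : Finset (Fin (m - 1))).filter (fun i =>
      p ⟨i.1, by have := i.2; omega⟩ = v ∨ p ⟨i.1 + 1, by have := i.2; omega⟩ = v)).card


noncomputable def scaleAt {n : ℕ} (μ : EdgeMeasure n) (x : Fin n) (t c : ℝ)
    (ht : 0 ≤ 1 + t) (hc : 0 < c) : EdgeMeasure n where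
  w i j := (if i = x ∨ j = x then 1 + t else 1) * μ.w i j / c
  symm i j := by
    rw [μ.symm i j]
    congr 2
    exact if_congr or_comm rfl rfl
  diag i := by simp [μ.diag]
  nonneg i j := by
    apply div_nonneg _ hc.le
    apply mul_nonneg _ (μ.nonneg i j)
    split
    · exact ht
    · norm_num

lemma mass_scaleAt {n : ℕ} (μ : EdgeMeasure n) (x : Fin n) (t c : ℝ)
    (ht : 0 ≤ 1 + t) (hc : 0 < c) :
    mass (scaleAt μ x t c ht hc) = (mass μ + t * mubar μ x) / c := by
  have key : ∀ i j : Fin n,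
      (if i = x ∨ j = x then 1 + t else 1) * μ.w i j / c
        = (μ.w i j + ((if i = x then t * μ.w i j else 0)
            + (if j = x then t * μ.w i j else 0))) / c := by
    intro i j
    by_cases hi : i = x <;> by_cases hj : j = x <;>
      simp [hi, hj, μ.diag] <;> ring
  have hA : ∀ i : Fin n, (∑ j, if i = x then t * μ.w i j else 0)
      = (if i = x then t * mubar μ x else 0) := by
    intro i
    by_cases h : i = x
    · subst h; simp [mubar, Finset.mul_sum]
    · simp [h]
  have hB : ∀ i : Fin n, (∑ j, if j = x then t * μ.w i j else 0) = t * μ.w i x := by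
    intro i; simp
  unfold mass scaleAt
  simp only [key, ← Finset.sum_div, Finset.sum_add_distrib, hA, hB,
    Finset.sum_ite_eq, Finset.sum_ite_eq', mem_univ, if_true]
  have hBsum : ∑ i : Fin n, t * μ.w i x = t * mubar μ x := by
    rw [← Finset.mul_sum, mubar]
    congr 1
    exact Finset.sum_congr rfl fun i _ => μ.symm i x
  rw [hBsum]
  field_simp
  ring

lemma pathWt_scaleAt {n m : ℕ} (μ : EdgeMeasure n) (x : Fin n) (t c : ℝ)
    (ht : 0 ≤ 1 + t) (hc : 0 < c) (p : Fin m → Fin n) :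
    pathWt (scaleAt μ x t c ht hc) p
      = (1 + t) ^ degTuple p x * pathWt μ p / c ^ (m - 1) := by
  unfold pathWt scaleAt degTuple
  dsimp only
  rw [Finset.prod_div_distrib, Finset.prod_mul_distrib, Finset.prod_const,
    Finset.card_univ, Fintype.card_fin]
  congr 2
  rw [Finset.prod_ite, Finset.prod_const, Finset.prod_const, one_pow, mul_one]

lemma betaP_scaleAt {n : ℕ} (m : ℕ) (μ : EdgeMeasure n) (x : Fin n) (t c : ℝ)
    (ht : 0 ≤ 1 + t) (hc : 0 < c) :
    betaP (scaleAt μ x t c ht hc) m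
      = ((∑ p ∈ univ.filter (fun p : Fin m → Fin n => Function.Injective p),
          (1 + t) ^ degTuple p x * pathWt μ p) / 2) / c ^ (m - 1) := by
  unfold betaP
  rw [Finset.sum_congr rfl (fun p _ => pathWt_scaleAt μ x t c ht hc p),
    ← Finset.sum_div]
  ring

/-- Lemma 2.8 (Cox–Martin): for an optimal probability measure `μ` for `β(·; P_m)`
on `K_n` and any vertex `x`,
`μ̄(x)·(m-1)·β(μ;P_m) = ∑_{P ∋ x} deg_P(x)·μ(P)` (the sum over unlabeled copies;
each copy corresponds to two labeled tuples, and `deg_P(x) = 0` when `x ∉ P`). -/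
theorem stmt10 (n m : ℕ) (hm : 2 ≤ m) (hmn : m ≤ n) (μ : EdgeMeasure n)
    (hmass : mass μ = 1)
    (hopt : ∀ η : EdgeMeasure n, mass η = 1 → betaP η m ≤ betaP μ m)
    (x : Fin n) :
    mubar μ x * ((m : ℝ) - 1) * betaP μ m =
      (∑ p ∈ univ.filter (fun p : Fin m → Fin n => Function.Injective p),
          (degTuple p x : ℝ) * pathWt μ p) / 2 := by
  classical
  set a := mubar μ x with ha
  have ha0 : 0 ≤ a := Finset.sum_nonneg fun u _ => μ.nonneg x u
  set S := univ.filter (fun p : Fin m → Fin n => Function.Injective p) with hS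
  set G : ℝ → ℝ := fun t => (∑ p ∈ S, (1 + t) ^ degTuple p x * pathWt μ p) / 2 with hGdef
  set f : ℝ → ℝ := fun t => G t / (1 + t * a) ^ (m - 1) with hfdef
  have hG0 : G 0 = betaP μ m := by simp [hGdef, betaP, hS]
  have hf0 : f 0 = betaP μ m := by simp [hfdef, hG0]
  -- local max at 0
  have hnb : ∀ᶠ t : ℝ in nhds 0, 0 < 1 + t ∧ 0 < 1 + t * a := by
    have h1 : ContinuousAt (fun t : ℝ => 1 + t) 0 := by fun_prop
    have h2 : ContinuousAt (fun t : ℝ => 1 + t * a) 0 := by fun_prop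
    have e1 : ∀ᶠ t : ℝ in nhds 0, 0 < 1 + t :=
      h1.eventually (eventually_gt_nhds (by norm_num : (0:ℝ) < 1 + 0))
    have e2 : ∀ᶠ t : ℝ in nhds 0, 0 < 1 + t * a :=
      h2.eventually (eventually_gt_nhds (by norm_num : (0:ℝ) < 1 + 0 * a))
    exact e1.and e2
  have hmax : IsLocalMax f 0 := by
    filter_upwards [hnb] with t ht
    obtain ⟨ht1, ht2⟩ := ht
    rw [hf0]
    have heq : f t = betaP (scaleAt μ x t (1 + t * a) ht1.le ht2) m := by
      rw [betaP_scaleAt, hfdef, hGdef]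
    rw [heq]
    apply hopt
    rw [mass_scaleAt, hmass]
    field_simp
    rfl
  -- derivative computation
  have hC : HasDerivAt (fun t : ℝ => (1 + t * a) ^ (m - 1)) (((m - 1 : ℕ) : ℝ) * a) 0 := by
    have h1 : HasDerivAt (fun t : ℝ => 1 + t * a) a 0 := by
      simpa using ((hasDerivAt_id (0 : ℝ)).mul_const a).const_add 1
    have h2 := h1.fun_pow (m - 1)
    simpa using h2
  have hGd : HasDerivAt G ((∑ p ∈ S, (degTuple p x : ℝ) * pathWt μ p) / 2) 0 := by
    apply HasDerivAt.div_const
    apply HasDerivAt.fun_sum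
    intro p _
    have h1 : HasDerivAt (fun t : ℝ => (1 + t) ^ degTuple p x) ((degTuple p x : ℝ)) 0 := by
      have h2 := ((hasDerivAt_id (0 : ℝ)).const_add 1).fun_pow (degTuple p x)
      simpa using h2
    simpa using h1.mul_const (pathWt μ p)
  have hfd : HasDerivAt f
      (((∑ p ∈ S, (degTuple p x : ℝ) * pathWt μ p) / 2 * (1 + 0 * a) ^ (m - 1)
        - G 0 * (((m - 1 : ℕ) : ℝ) * a)) / ((1 + 0 * a) ^ (m - 1)) ^ 2) 0 :=
    hGd.div hC (by norm_num)
  have hderiv0 : deriv f 0 = 0 := hmax.deriv_eq_zero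
  have := hfd.deriv
  rw [hderiv0] at this
  rw [hG0] at this
  have hcast : ((m - 1 : ℕ) : ℝ) = (m : ℝ) - 1 := by
    have : 1 ≤ m := by omega
    push_cast [this]
    ring
  simp only [zero_mul, add_zero, one_pow, mul_one, pow_two] at this
  rw [hcast] at this
  linarith [this]
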